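/- Let w, h > 0 and α ∈ ℝ. On the rectangle [0,w] × [0,h] define the distance d(x,y) = (1+|α|)|x₁−y₁| + |x₂−y₂| (the ℓ1 curve-length metric induced by the single-channel line image Φ(x) = αx₁ + const). Then the product measure ν = ν₁ × ν₂, where ν₁ = (1/2)((1+|α|)·λ restricted to [0,w] + δ_0 + δ_w) and ν₂ = (1/2)(λ restricted to [0,h] + δ_0 + δ_h), satisfies ∫ e^{−d(x,y)} dν(x) = 1 for every y ∈ [0,w] × [0,h]. -/

import Mathlib

open MeasureTheory
open scoped ENNReal

lemma exp_int (c k a b : ℝ) (hc : c ≠ 0) :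
    ∫ x in a..b, Real.exp (c*x + k) = (Real.exp (c*b+k) - Real.exp (c*a+k))/c := by
  have h : ∀ x ∈ Set.uIcc a b,
      HasDerivAt (fun x => Real.exp (c*x+k)/c) (Real.exp (c*x+k)) x := by
    intro x _
    have h1 : HasDerivAt (fun x => c*x+k) c x := by
      simpa using ((hasDerivAt_id x).const_mul c).add_const k
    have h2 := (h1.exp).div_const c
    simpa [mul_div_assoc, mul_comm, mul_div_cancel_left₀, hc] using h2
  rw [intervalIntegral.integral_eq_sub_of_hasDerivAt h]
  · ring
  · exact (Real.continuous_exp.comp (by continuity)).intervalIntegrable a b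

lemma oneD (c L y : ℝ) (hc : 0 < c) (hy0 : 0 ≤ y) (hyL : y ≤ L) :
    ∫ x, Real.exp (-(c*|x-y|))
      ∂((2 : ℝ≥0∞)⁻¹ • (ENNReal.ofReal c • volume.restrict (Set.Icc 0 L)
        + Measure.dirac 0 + Measure.dirac L)) = 1 := by
  have hcne : c ≠ 0 := hc.ne'
  have hcont : Continuous fun x => Real.exp (-(c*|x-y|)) := by continuity
  have hint : ∀ (μ : Measure ℝ) [IsFiniteMeasure μ],
      Integrable (fun x => Real.exp (-(c*|x-y|))) μ := by
    intro μ _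
    refine Integrable.mono' (integrable_const 1) hcont.aestronglyMeasurable ?_
    filter_upwards with x
    rw [Real.norm_eq_abs, abs_of_pos (Real.exp_pos _)]
    exact Real.exp_le_one_iff.2 (neg_nonpos.2 (by positivity))
  haveI : IsFiniteMeasure (volume.restrict (Set.Icc (0:ℝ) L)) := by
    constructor
    rw [Measure.restrict_apply_univ, Real.volume_Icc]
    exact ENNReal.ofReal_lt_top
  have i1 : Integrable (fun x => Real.exp (-(c*|x-y|)))
      (ENNReal.ofReal c • volume.restrict (Set.Icc 0 L)) :=
    (hint _).smul_measure ENNReal.ofReal_ne_top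
  have i2 := hint (Measure.dirac (0:ℝ))
  have i3 := hint (Measure.dirac L)
  rw [integral_smul_measure, integral_add_measure (i1.add_measure i2) i3,
    integral_add_measure i1 i2, integral_smul_measure, integral_dirac, integral_dirac]
  have hIcc : ∫ x in Set.Icc 0 L, Real.exp (-(c*|x-y|))
      = (1 - Real.exp (-(c*y)))/c + (1 - Real.exp (-(c*(L-y))))/c := by
    rw [MeasureTheory.integral_Icc_eq_integral_Ioc,
      ← intervalIntegral.integral_of_le (le_trans hy0 hyL),
      ← intervalIntegral.integral_add_adjacent_intervals
        (a := 0) (b := y) (c := L) (hcont.intervalIntegrable 0 y)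
        (hcont.intervalIntegrable y L)]
    have h1 : ∫ x in (0:ℝ)..y, Real.exp (-(c*|x-y|))
        = ∫ x in (0:ℝ)..y, Real.exp (c*x + (-(c*y))) := by
      apply intervalIntegral.integral_congr
      intro x hx
      rw [Set.uIcc_of_le hy0] at hx
      have hax : |x - y| = -(x - y) := abs_of_nonpos (by linarith [hx.2])
      show Real.exp (-(c*|x-y|)) = Real.exp (c*x + (-(c*y)))
      rw [hax]; ring_nf
    have h2 : ∫ x in y..L, Real.exp (-(c*|x-y|))
        = ∫ x in y..L, Real.exp ((-c)*x + (c*y)) := by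
      apply intervalIntegral.integral_congr
      intro x hx
      rw [Set.uIcc_of_le hyL] at hx
      have hax : |x - y| = x - y := abs_of_nonneg (by linarith [hx.1])
      show Real.exp (-(c*|x-y|)) = Real.exp ((-c)*x + (c*y))
      rw [hax]; ring_nf
    rw [h1, h2, exp_int c _ _ _ hcne, exp_int (-c) _ _ _ (neg_ne_zero.2 hcne)]
    have e1 : c*y + -(c*y) = 0 := by ring
    have e2 : c*0 + -(c*y) = -(c*y) := by ring
    have e3 : -c*L + c*y = -(c*(L-y)) := by ring
    have e4 : -c*y + c*y = 0 := by ring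
    rw [e1, e2, e3, e4, Real.exp_zero]
    field_simp
    ring
  rw [hIcc]
  have t2 : ((2:ℝ≥0∞)⁻¹).toReal = 1/2 := by simp
  have tc : (ENNReal.ofReal c).toReal = c := ENNReal.toReal_ofReal hc.le
  have a0 : |(0:ℝ) - y| = y := by rw [abs_of_nonpos (by linarith)]; ring
  have aL : |L - y| = L - y := abs_of_nonneg (by linarith)
  rw [t2, tc, a0, aL]
  field_simp
  have hc' : c * c⁻¹ = 1 := mul_inv_cancel₀ hcne
  ring_nf
  linear_combination (1 - Real.exp (-(c * y)) * (1/2) - Real.exp (c * y - c * L) * (1/2)) * hc'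

/-- For the analogue line image `Φ(x) = αx₁ + const` on `[0,w] × [0,h]` with
ℓ¹ curve-length metric `d(x,y) = (1+|α|)|x₁-y₁| + |x₂-y₂|`, the product measure
`ν = ν₁ × ν₂` with `ν₁ = (1/2)((1+|α|)·λ|_{[0,w]} + δ_0 + δ_w)` and
`ν₂ = (1/2)(λ|_{[0,h]} + δ_0 + δ_h)` is a magnitude measure. -/
theorem magnitude_measure_2d_line_image (w h α : ℝ) (hw : 0 < w) (hh : 0 < h)
    (d : ℝ × ℝ → ℝ × ℝ → ℝ)
    (hd : ∀ x y, d x y = (1 + |α|) * |x.1 - y.1| + |x.2 - y.2|)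
    (ν₁ ν₂ : Measure ℝ)
    (hν₁ : ν₁ = (2 : ℝ≥0∞)⁻¹ •
      (ENNReal.ofReal (1 + |α|) • volume.restrict (Set.Icc 0 w) +
        Measure.dirac 0 + Measure.dirac w))
    (hν₂ : ν₂ = (2 : ℝ≥0∞)⁻¹ •
      (volume.restrict (Set.Icc 0 h) + Measure.dirac 0 + Measure.dirac h)) :
    ∀ y ∈ Set.Icc (0 : ℝ) w ×ˢ Set.Icc (0 : ℝ) h,
      ∫ x : ℝ × ℝ, Real.exp (-(d x y)) ∂(ν₁.prod ν₂) = 1 := by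
  subst hν₁ hν₂
  intro y hy
  obtain ⟨⟨hy1a, hy1b⟩, hy2a, hy2b⟩ := hy
  have hc : 0 < 1 + |α| := by positivity
  have key : ∀ x : ℝ × ℝ, Real.exp (-(d x y))
      = Real.exp (-((1+|α|)*|x.1-y.1|)) * Real.exp (-((1:ℝ)*|x.2-y.2|)) := by
    intro x; rw [hd, ← Real.exp_add]; ring_nf
  simp only [key]
  have hf := MeasureTheory.integral_prod_mul
    (μ := (2 : ℝ≥0∞)⁻¹ • (ENNReal.ofReal (1 + |α|) • volume.restrict (Set.Icc 0 w) +
        Measure.dirac 0 + Measure.dirac w))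
    (ν := (2 : ℝ≥0∞)⁻¹ • (volume.restrict (Set.Icc 0 h) + Measure.dirac 0 + Measure.dirac h))
    (f := fun t => Real.exp (-((1+|α|)*|t - y.1|)))
    (g := fun t => Real.exp (-((1:ℝ)*|t - y.2|)))
  rw [hf]
  rw [oneD _ _ _ hc hy1a hy1b]
  have h2 := oneD 1 h y.2 one_pos hy2a hy2b
  simp only [ENNReal.ofReal_one, one_smul] at h2
  rw [h2, mul_one]
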